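/- Let m, n be positive integers, ρ₂ > 0, ε > 0, M ≥ 0. Let u₁, u₂ ∈ ℝ^{m×n} and h₁, h₂ ∈ ℝ^{m×n} × ℝ^{m×n} with ‖h₁‖₂ ≥ ε and ‖h₂‖₂ ≥ ε. Set a₁ = ‖∇u₁‖₁ and a₂ = ‖∇u₂‖₁, and assume a₁ ≤ M and a₂ ≤ M. Define b₁ = −(a₁/ρ₂)·h₁/‖h₁‖₂³ and b₂ = −(a₂/ρ₂)·h₂/‖h₂‖₂³. Then ‖b₁ − b₂‖₂² ≤ (32mn/(ρ₂²ε⁴))·‖u₁ − u₂‖₂² + (8M²/(ρ₂²ε⁶))·‖h₁ − h₂‖₂². -/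

import Mathlib

open Finset Filter

noncomputable def gradX (m n : ℕ) (u : Fin m → Fin n → ℝ) : Fin m → Fin n → ℝ :=
  fun i j => if h : (i : ℕ) + 1 < m then u ⟨(i : ℕ) + 1, h⟩ j - u i j else 0

noncomputable def gradY (m n : ℕ) (u : Fin m → Fin n → ℝ) : Fin m → Fin n → ℝ :=
  fun i j => if h : (j : ℕ) + 1 < n then u i ⟨(j : ℕ) + 1, h⟩ - u i j else 0

/-- The discrete forward-difference gradient operator `∇`. -/
noncomputable def grad (m n : ℕ) (u : Fin m → Fin n → ℝ) :
    (Fin m → Fin n → ℝ) × (Fin m → Fin n → ℝ) :=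
  (gradX m n u, gradY m n u)

/-- Squared Euclidean norm on `ℝ^{m×n}`. -/
noncomputable def mnorm2sq (m n : ℕ) (u : Fin m → Fin n → ℝ) : ℝ :=
  ∑ i, ∑ j, (u i j) ^ 2

/-- Euclidean norm on `ℝ^{m×n}`. -/
noncomputable def mnorm2 (m n : ℕ) (u : Fin m → Fin n → ℝ) : ℝ :=
  Real.sqrt (mnorm2sq m n u)

/-- Euclidean inner product on `ℝ^{m×n}`. -/
noncomputable def minner (m n : ℕ) (u v : Fin m → Fin n → ℝ) : ℝ :=
  ∑ i, ∑ j, u i j * v i j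

/-- Squared Euclidean norm on `ℝ^{m×n} × ℝ^{m×n}`. -/
noncomputable def pnorm2sq (m n : ℕ)
    (h : (Fin m → Fin n → ℝ) × (Fin m → Fin n → ℝ)) : ℝ :=
  mnorm2sq m n h.1 + mnorm2sq m n h.2

/-- Euclidean norm on `ℝ^{m×n} × ℝ^{m×n}`. -/
noncomputable def pnorm2 (m n : ℕ)
    (h : (Fin m → Fin n → ℝ) × (Fin m → Fin n → ℝ)) : ℝ :=
  Real.sqrt (pnorm2sq m n h)

/-- Euclidean inner product on `ℝ^{m×n} × ℝ^{m×n}`. -/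
noncomputable def pinner (m n : ℕ)
    (h g : (Fin m → Fin n → ℝ) × (Fin m → Fin n → ℝ)) : ℝ :=
  minner m n h.1 g.1 + minner m n h.2 g.2

/-- `‖∇u‖₁`, the (anisotropic) ℓ¹ norm of the discrete gradient. -/
noncomputable def gradL1 (m n : ℕ) (u : Fin m → Fin n → ℝ) : ℝ :=
  ∑ i, ∑ j, (|gradX m n u i j| + |gradY m n u i j|)

/-- View `u ∈ ℝ^{m×n}` as a vector in `ℝ^{mn}`. -/
noncomputable def flatten (m n : ℕ) (u : Fin m → Fin n → ℝ) : Fin m × Fin n → ℝ :=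
  fun ij => u ij.1 ij.2

/-- Squared Euclidean norm on `ℝ^p`. -/
noncomputable def vnorm2sq (p : ℕ) (v : Fin p → ℝ) : ℝ := ∑ k, (v k) ^ 2

/-- The augmented Lagrangian of the unconstrained `L₁/L₂` model:
`L(u, h; b) = ‖∇u‖₁/‖h‖₂ + (λ/2)‖Au − f‖₂² + ρ₂⟨b, ∇u − h⟩ + (ρ₂/2)‖h − ∇u‖₂²`. -/
noncomputable def augL (m n p : ℕ) (A : Matrix (Fin p) (Fin m × Fin n) ℝ) (f : Fin p → ℝ)
    (lam ρ₂ : ℝ) (u : Fin m → Fin n → ℝ)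
    (h b : (Fin m → Fin n → ℝ) × (Fin m → Fin n → ℝ)) : ℝ :=
  gradL1 m n u / pnorm2 m n h
    + lam / 2 * vnorm2sq p (A.mulVec (flatten m n u) - f)
    + ρ₂ * pinner m n b (grad m n u - h)
    + ρ₂ / 2 * pnorm2sq m n (h - grad m n u)

/-- Adjoint of `gradX` with respect to the Euclidean inner products. -/
noncomputable def gradTX (m n : ℕ) (q : Fin m → Fin n → ℝ) : Fin m → Fin n → ℝ :=
  fun i j =>
    (if 0 < (i : ℕ) then
        q ⟨(i : ℕ) - 1, Nat.lt_of_le_of_lt (Nat.sub_le _ _) i.isLt⟩ j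
      else 0)
      - (if (i : ℕ) + 1 < m then q i j else 0)

/-- Adjoint of `gradY` with respect to the Euclidean inner products. -/
noncomputable def gradTY (m n : ℕ) (q : Fin m → Fin n → ℝ) : Fin m → Fin n → ℝ :=
  fun i j =>
    (if 0 < (j : ℕ) then
        q i ⟨(j : ℕ) - 1, Nat.lt_of_le_of_lt (Nat.sub_le _ _) j.isLt⟩
      else 0)
      - (if (j : ℕ) + 1 < n then q i j else 0)

/-- `∇ᵀ`, the adjoint of the discrete gradient operator. -/
noncomputable def gradAdj (m n : ℕ)
    (h : (Fin m → Fin n → ℝ) × (Fin m → Fin n → ℝ)) : Fin m → Fin n → ℝ :=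
  fun i j => gradTX m n h.1 i j + gradTY m n h.2 i j

lemma core_scalar (ε N₁ N₂ t : ℝ) (hε : 0 < ε) (h1 : ε ≤ N₁) (h2 : ε ≤ N₂) (ht : t ≤ N₁ * N₂) :
    1/N₁^4 - 2*t/(N₁^3*N₂^3) + 1/N₂^4 ≤ 4/ε^6 * (N₁^2 - 2*t + N₂^2) := by
  have hN₁ : 0 < N₁ := lt_of_lt_of_le hε h1
  have hN₂ : 0 < N₂ := lt_of_lt_of_le hε h2
  have hA : ε^6 ≤ N₁^3 * N₂^3 := by nlinarith [pow_le_pow_left₀ hε.le h1 3, pow_le_pow_left₀ hε.le h2 3, pow_pos hε 3]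
  have hB : ε^6 ≤ N₁^2 * N₂^4 := by nlinarith [pow_le_pow_left₀ hε.le h1 2, pow_le_pow_left₀ hε.le h2 4, pow_pos hε 2, pow_pos hε 4]
  have hC : ε^6 ≤ N₁^4 * N₂^2 := by nlinarith [pow_le_pow_left₀ hε.le h1 4, pow_le_pow_left₀ hε.le h2 2, pow_pos hε 2, pow_pos hε 4]
  have hD : ε^6*(N₁+N₂)^2 ≤ 4*N₁^4*N₂^4 := by
    nlinarith [mul_le_mul_of_nonneg_right hB (sq_nonneg N₁), mul_le_mul_of_nonneg_right hC (sq_nonneg N₂), sq_nonneg (N₁-N₂)]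
  have hE : 0 ≤ 4*N₁^4*N₂^4*(N₁-N₂)^2 - ε^6*(N₁^2-N₂^2)^2 := by
    nlinarith [mul_le_mul_of_nonneg_right hD (sq_nonneg (N₁-N₂))]
  have hF : 0 ≤ (N₁*N₂ - t)*(4*N₁^4*N₂^4 - ε^6*N₁*N₂) :=
    mul_nonneg (by linarith) (by nlinarith [mul_le_mul_of_nonneg_right hA (mul_pos hN₁ hN₂).le, mul_pos (pow_pos hN₁ 4) (pow_pos hN₂ 4)])
  have hP : 0 ≤ 4*N₁^4*N₂^4*(N₁^2-2*t+N₂^2) - ε^6*(N₂^4 - 2*t*N₁*N₂ + N₁^4) := by nlinarith [hE, hF]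
  have heq : 4/ε^6 * (N₁^2 - 2*t + N₂^2) - (1/N₁^4 - 2*t/(N₁^3*N₂^3) + 1/N₂^4)
      = (4*N₁^4*N₂^4*(N₁^2-2*t+N₂^2) - ε^6*(N₂^4 - 2*t*N₁*N₂ + N₁^4)) / (ε^6*N₁^4*N₂^4) := by
    field_simp
  linarith [div_nonneg hP (by positivity : (0:ℝ) ≤ ε^6*N₁^4*N₂^4), heq.symm ▸ (div_nonneg hP (by positivity : (0:ℝ) ≤ ε^6*N₁^4*N₂^4))]

section lemmas
variable (m n : ℕ)

lemma mnorm2sq_nonneg (u : Fin m → Fin n → ℝ) : 0 ≤ mnorm2sq m n u := by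
  unfold mnorm2sq; positivity

lemma pnorm2sq_nonneg (h : (Fin m → Fin n → ℝ) × (Fin m → Fin n → ℝ)) : 0 ≤ pnorm2sq m n h :=
  add_nonneg (mnorm2sq_nonneg m n _) (mnorm2sq_nonneg m n _)

lemma pnorm2_sq (h : (Fin m → Fin n → ℝ) × (Fin m → Fin n → ℝ)) :
    pnorm2 m n h ^ 2 = pnorm2sq m n h := Real.sq_sqrt (pnorm2sq_nonneg m n h)

lemma pnorm2sq_smul (c : ℝ) (h : (Fin m → Fin n → ℝ) × (Fin m → Fin n → ℝ)) :
    pnorm2sq m n (c • h) = c ^ 2 * pnorm2sq m n h := by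
  simp only [pnorm2sq, mnorm2sq, Prod.smul_fst, Prod.smul_snd, Pi.smul_apply, smul_eq_mul,
    mul_pow, ← Finset.mul_sum, mul_add]

lemma sum_sub_sq (f g : Fin m → Fin n → ℝ) :
    ∑ i, ∑ j, (f i j - g i j)^2
      = (∑ i, ∑ j, f i j^2) - 2*(∑ i, ∑ j, f i j * g i j) + ∑ i, ∑ j, g i j^2 := by
  simp only [sub_sq, mul_assoc, Finset.sum_add_distrib, Finset.sum_sub_distrib, ← Finset.mul_sum]

lemma pnorm2sq_sub (x y : (Fin m → Fin n → ℝ) × (Fin m → Fin n → ℝ)) :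
    pnorm2sq m n (x - y) = pnorm2sq m n x - 2 * pinner m n x y + pnorm2sq m n y := by
  simp only [pnorm2sq, mnorm2sq, pinner, minner, Prod.fst_sub, Prod.snd_sub, Pi.sub_apply]
  rw [sum_sub_sq, sum_sub_sq]
  ring

lemma pinner_neg_right (x y : (Fin m → Fin n → ℝ) × (Fin m → Fin n → ℝ)) :
    pinner m n x (-y) = - pinner m n x y := by
  simp only [pinner, minner, Prod.fst_neg, Prod.snd_neg, Pi.neg_apply, mul_neg,
    Finset.sum_neg_distrib]
  ring

lemma pinner_smul_smul (c d : ℝ) (x y : (Fin m → Fin n → ℝ) × (Fin m → Fin n → ℝ)) :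
    pinner m n (c • x) (d • y) = c * d * pinner m n x y := by
  have e : ∀ a b : ℝ, c * a * (d * b) = c * d * (a * b) := fun a b => by ring
  simp only [pinner, minner, Prod.smul_fst, Prod.smul_snd, Pi.smul_apply, smul_eq_mul, e,
    ← Finset.mul_sum, mul_add]

lemma pnorm2sq_neg (y : (Fin m → Fin n → ℝ) × (Fin m → Fin n → ℝ)) :
    pnorm2sq m n (-y) = pnorm2sq m n y := by
  simp [pnorm2sq, mnorm2sq, Prod.fst_neg, Prod.snd_neg, Pi.neg_apply, neg_sq]

lemma pnorm2sq_add_le (x y : (Fin m → Fin n → ℝ) × (Fin m → Fin n → ℝ)) :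
    pnorm2sq m n (x + y) ≤ 2 * pnorm2sq m n x + 2 * pnorm2sq m n y := by
  have h1 := pnorm2sq_nonneg m n (x - y)
  have h2 := pnorm2sq_sub m n x y
  have h3 : pnorm2sq m n (x + y) = pnorm2sq m n x + 2 * pinner m n x y + pnorm2sq m n y := by
    have e := pnorm2sq_sub m n x (-y)
    rw [sub_neg_eq_add, pinner_neg_right, pnorm2sq_neg] at e
    linarith [e]
  linarith
end lemmas

section glemmas
variable (m n : ℕ)

lemma shift_sum_le (W : Fin m → ℝ) (hW : ∀ i, 0 ≤ W i) :
    ∑ i : Fin m, (if h : (i : ℕ) + 1 < m then W ⟨(i : ℕ) + 1, h⟩ else 0) ≤ ∑ i, W i := by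
  set H : ℕ → ℝ := fun k => if h : k < m then W ⟨k, h⟩ else 0 with hH
  have hHnn : ∀ k, 0 ≤ H k := by
    intro k; simp only [hH]; split
    · exact hW _
    · exact le_rfl
  have e1 : ∑ i : Fin m, (if h : (i : ℕ) + 1 < m then W ⟨(i : ℕ) + 1, h⟩ else 0)
      = ∑ i ∈ range m, H (i + 1) := by
    rw [← Fin.sum_univ_eq_sum_range (fun k => H (k + 1)) m]
  have e2 : ∑ i : Fin m, W i = ∑ i ∈ range m, H i := by
    rw [← Fin.sum_univ_eq_sum_range H m]
    refine Finset.sum_congr rfl fun i _ => ?_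
    simp [hH, i.isLt]
    
  have e3 : ∑ i ∈ range (m + 1), H i = (∑ i ∈ range m, H (i + 1)) + H 0 :=
    Finset.sum_range_succ' H m
  have e4 : ∑ i ∈ range (m + 1), H i = (∑ i ∈ range m, H i) + H m :=
    Finset.sum_range_succ H m
  have e5 : H m = 0 := by simp [hH]
  rw [e1, e2]
  have := hHnn 0
  linarith

lemma gradX_sq_sum_le (v : Fin m → Fin n → ℝ) :
    ∑ i, ∑ j, (gradX m n v i j) ^ 2 ≤ 4 * mnorm2sq m n v := by
  have step : ∀ (i : Fin m) (j : Fin n), (gradX m n v i j) ^ 2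
      ≤ 2 * (if h : (i : ℕ) + 1 < m then v ⟨(i : ℕ) + 1, h⟩ j else 0) ^ 2 + 2 * (v i j) ^ 2 := by
    intro i j
    unfold gradX
    split
    · rename_i h
      nlinarith [sq_nonneg (v ⟨(i:ℕ)+1, h⟩ j + v i j)]
    · norm_num
      positivity
  have h1 : ∑ i, ∑ j, (gradX m n v i j) ^ 2
      ≤ 2 * (∑ i : Fin m, ∑ j, (if h : (i : ℕ) + 1 < m then v ⟨(i : ℕ) + 1, h⟩ j else 0) ^ 2)
        + 2 * mnorm2sq m n v := by
    rw [mnorm2sq, Finset.mul_sum, Finset.mul_sum, ← Finset.sum_add_distrib]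
    refine Finset.sum_le_sum fun i _ => ?_
    rw [Finset.mul_sum, Finset.mul_sum, ← Finset.sum_add_distrib]
    exact Finset.sum_le_sum fun j _ => step i j
  have h2 : ∑ i : Fin m, ∑ j, (if h : (i : ℕ) + 1 < m then v ⟨(i : ℕ) + 1, h⟩ j else 0) ^ 2
      ≤ mnorm2sq m n v := by
    rw [mnorm2sq]
    have e : ∀ i : Fin m, ∑ j, (if h : (i : ℕ) + 1 < m then v ⟨(i : ℕ) + 1, h⟩ j else 0) ^ 2
        = (if h : (i : ℕ) + 1 < m then (fun i' : Fin m => ∑ j, v i' j ^ 2) ⟨(i : ℕ) + 1, h⟩ else 0) := by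
      intro i
      by_cases h : (i : ℕ) + 1 < m <;> simp [h]
    rw [Finset.sum_congr rfl fun i _ => e i]
    exact shift_sum_le m (fun i' => ∑ j, v i' j ^ 2) (fun i' => by positivity)
  linarith

lemma gradY_sq_sum_le (v : Fin m → Fin n → ℝ) :
    ∑ i, ∑ j, (gradY m n v i j) ^ 2 ≤ 4 * mnorm2sq m n v := by
  have key : ∀ i : Fin m, ∑ j, (gradY m n v i j) ^ 2 ≤ 4 * ∑ j, (v i j) ^ 2 := by
    intro i
    have step : ∀ j : Fin n, (gradY m n v i j) ^ 2
        ≤ 2 * (if h : (j : ℕ) + 1 < n then (fun j' => (v i j') ^ 2) ⟨(j : ℕ) + 1, h⟩ else 0)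
          + 2 * (v i j) ^ 2 := by
      intro j
      unfold gradY
      split
      · rename_i h
        simp only
        nlinarith [sq_nonneg (v i ⟨(j:ℕ)+1, h⟩ + v i j)]
      · norm_num
        positivity
    calc ∑ j, (gradY m n v i j) ^ 2
        ≤ ∑ j : Fin n, (2 * (if h : (j : ℕ) + 1 < n then (fun j' => (v i j') ^ 2) ⟨(j : ℕ) + 1, h⟩ else 0)
            + 2 * (v i j) ^ 2) := Finset.sum_le_sum fun j _ => step j
      _ = 2 * (∑ j : Fin n, (if h : (j : ℕ) + 1 < n then (fun j' => (v i j') ^ 2) ⟨(j : ℕ) + 1, h⟩ else 0))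
            + 2 * ∑ j, (v i j) ^ 2 := by
          rw [Finset.sum_add_distrib, ← Finset.mul_sum, ← Finset.mul_sum]
      _ ≤ 2 * ∑ j, (v i j) ^ 2 + 2 * ∑ j, (v i j) ^ 2 := by
          have := shift_sum_le n (fun j' => (v i j') ^ 2) (fun j' => by positivity)
          linarith
      _ = 4 * ∑ j, (v i j) ^ 2 := by ring
  rw [mnorm2sq, Finset.mul_sum]
  exact Finset.sum_le_sum fun i _ => key i
end glemmas

section g2
variable (m n : ℕ)

lemma gradL1_nonneg (u : Fin m → Fin n → ℝ) : 0 ≤ gradL1 m n u := by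
  unfold gradL1; positivity

lemma gradX_sub (u₁ u₂ : Fin m → Fin n → ℝ) (i : Fin m) (j : Fin n) :
    gradX m n (u₁ - u₂) i j = gradX m n u₁ i j - gradX m n u₂ i j := by
  unfold gradX
  split
  · simp only [Pi.sub_apply]; ring
  · simp

lemma gradY_sub (u₁ u₂ : Fin m → Fin n → ℝ) (i : Fin m) (j : Fin n) :
    gradY m n (u₁ - u₂) i j = gradY m n u₁ i j - gradY m n u₂ i j := by
  unfold gradY
  split
  · simp only [Pi.sub_apply]; ring
  · simp

lemma abs_gradL1_sub (u₁ u₂ : Fin m → Fin n → ℝ) :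
    |gradL1 m n u₁ - gradL1 m n u₂| ≤ gradL1 m n (u₁ - u₂) := by
  unfold gradL1
  rw [← Finset.sum_sub_distrib]
  simp_rw [← Finset.sum_sub_distrib]
  calc |∑ i, ∑ j, ((|gradX m n u₁ i j| + |gradY m n u₁ i j|) - (|gradX m n u₂ i j| + |gradY m n u₂ i j|))|
      ≤ ∑ i, |∑ j, ((|gradX m n u₁ i j| + |gradY m n u₁ i j|) - (|gradX m n u₂ i j| + |gradY m n u₂ i j|))| :=
        Finset.abs_sum_le_sum_abs _ _
    _ ≤ ∑ i, ∑ j, |(|gradX m n u₁ i j| + |gradY m n u₁ i j|) - (|gradX m n u₂ i j| + |gradY m n u₂ i j|)| :=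
        Finset.sum_le_sum fun i _ => Finset.abs_sum_le_sum_abs _ _
    _ ≤ ∑ i, ∑ j, (|gradX m n (u₁ - u₂) i j| + |gradY m n (u₁ - u₂) i j|) := by
        refine Finset.sum_le_sum fun i _ => Finset.sum_le_sum fun j _ => ?_
        rw [gradX_sub, gradY_sub]
        have e : (|gradX m n u₁ i j| + |gradY m n u₁ i j|) - (|gradX m n u₂ i j| + |gradY m n u₂ i j|)
            = (|gradX m n u₁ i j| - |gradX m n u₂ i j|) + (|gradY m n u₁ i j| - |gradY m n u₂ i j|) := by
          ring
        rw [e]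
        calc |(|gradX m n u₁ i j| - |gradX m n u₂ i j|) + (|gradY m n u₁ i j| - |gradY m n u₂ i j|)|
            ≤ |(|gradX m n u₁ i j| - |gradX m n u₂ i j|)| + |(|gradY m n u₁ i j| - |gradY m n u₂ i j|)| :=
              abs_add_le _ _
          _ ≤ |gradX m n u₁ i j - gradX m n u₂ i j| + |gradY m n u₁ i j - gradY m n u₂ i j| :=
              add_le_add (abs_abs_sub_abs_le_abs_sub _ _) (abs_abs_sub_abs_le_abs_sub _ _)

lemma gradL1_sq_le (v : Fin m → Fin n → ℝ) :
    (gradL1 m n v) ^ 2 ≤ 16 * m * n * mnorm2sq m n v := by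
  have h0 : gradL1 m n v = ∑ p : Fin m × Fin n, (|gradX m n v p.1 p.2| + |gradY m n v p.1 p.2|) := by
    rw [gradL1, Fintype.sum_prod_type]
  have h1 : (gradL1 m n v) ^ 2
      ≤ (m * n : ℝ) * ∑ p : Fin m × Fin n, (|gradX m n v p.1 p.2| + |gradY m n v p.1 p.2|) ^ 2 := by
    rw [h0]
    have := sq_sum_le_card_mul_sum_sq (s := (univ : Finset (Fin m × Fin n)))
      (f := fun p : Fin m × Fin n => |gradX m n v p.1 p.2| + |gradY m n v p.1 p.2|)
    simpa using this
  have h2 : ∑ p : Fin m × Fin n, (|gradX m n v p.1 p.2| + |gradY m n v p.1 p.2|) ^ 2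
      ≤ 16 * mnorm2sq m n v := by
    calc ∑ p : Fin m × Fin n, (|gradX m n v p.1 p.2| + |gradY m n v p.1 p.2|) ^ 2
        ≤ ∑ p : Fin m × Fin n, (2 * (gradX m n v p.1 p.2) ^ 2 + 2 * (gradY m n v p.1 p.2) ^ 2) := by
          refine Finset.sum_le_sum fun p _ => ?_
          nlinarith [sq_nonneg (|gradX m n v p.1 p.2| - |gradY m n v p.1 p.2|),
            sq_abs (gradX m n v p.1 p.2), sq_abs (gradY m n v p.1 p.2)]
      _ = 2 * (∑ i, ∑ j, (gradX m n v i j) ^ 2) + 2 * (∑ i, ∑ j, (gradY m n v i j) ^ 2) := by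
          rw [Finset.sum_add_distrib, Fintype.sum_prod_type, Fintype.sum_prod_type]
          simp_rw [← Finset.mul_sum]
      _ ≤ 2 * (4 * mnorm2sq m n v) + 2 * (4 * mnorm2sq m n v) :=
          add_le_add (by linarith [gradX_sq_sum_le m n v]) (by linarith [gradY_sq_sum_le m n v])
      _ = 16 * mnorm2sq m n v := by ring
  have hnn : (0:ℝ) ≤ (m*n:ℝ) := by positivity
  calc (gradL1 m n v) ^ 2 ≤ (m * n : ℝ) * (16 * mnorm2sq m n v) :=
        h1.trans (mul_le_mul_of_nonneg_left h2 hnn)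
    _ = 16 * m * n * mnorm2sq m n v := by ring
end g2

set_option maxHeartbeats 1000000 in
/-- Paper's Lemma 4.1: bound on the change of the ADMM dual variable. -/
theorem stmt0 (m n : ℕ) (hm : 0 < m) (hn : 0 < n) (ρ₂ ε M : ℝ)
    (hρ : 0 < ρ₂) (hε : 0 < ε) (hM : 0 ≤ M)
    (u₁ u₂ : Fin m → Fin n → ℝ)
    (h₁ h₂ : (Fin m → Fin n → ℝ) × (Fin m → Fin n → ℝ))
    (hh₁ : ε ≤ pnorm2 m n h₁) (hh₂ : ε ≤ pnorm2 m n h₂)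
    (ha₁ : gradL1 m n u₁ ≤ M) (ha₂ : gradL1 m n u₂ ≤ M)
    (b₁ b₂ : (Fin m → Fin n → ℝ) × (Fin m → Fin n → ℝ))
    (hb₁ : b₁ = (-(gradL1 m n u₁ / (ρ₂ * (pnorm2 m n h₁) ^ 3))) • h₁)
    (hb₂ : b₂ = (-(gradL1 m n u₂ / (ρ₂ * (pnorm2 m n h₂) ^ 3))) • h₂) :
    pnorm2sq m n (b₁ - b₂) ≤
      (32 * (m : ℝ) * n / (ρ₂ ^ 2 * ε ^ 4)) * mnorm2sq m n (u₁ - u₂)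
        + (8 * M ^ 2 / (ρ₂ ^ 2 * ε ^ 6)) * pnorm2sq m n (h₁ - h₂) := by
  have hN₁pos : 0 < pnorm2 m n h₁ := lt_of_lt_of_le hε hh₁
  have hN₂pos : 0 < pnorm2 m n h₂ := lt_of_lt_of_le hε hh₂
  set a₁ := gradL1 m n u₁ with ha₁d
  set a₂ := gradL1 m n u₂ with ha₂d
  set N₁ := pnorm2 m n h₁ with hN₁d
  set N₂ := pnorm2 m n h₂ with hN₂d
  have hX : pnorm2sq m n h₁ = N₁ ^ 2 := (pnorm2_sq m n h₁).symm
  have hY : pnorm2sq m n h₂ = N₂ ^ 2 := (pnorm2_sq m n h₂).symm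
  have ht : pinner m n h₁ h₂ ≤ N₁ * N₂ := by
    have h0 := pnorm2sq_nonneg m n (N₂ • h₁ - N₁ • h₂)
    rw [pnorm2sq_sub, pnorm2sq_smul, pnorm2sq_smul, pinner_smul_smul, hX, hY] at h0
    nlinarith [mul_pos hN₁pos hN₂pos]
  have hcore : pnorm2sq m n ((1/N₁^3) • h₁ - (1/N₂^3) • h₂)
      ≤ 4/ε^6 * pnorm2sq m n (h₁ - h₂) := by
    rw [pnorm2sq_sub, pnorm2sq_smul, pnorm2sq_smul, pinner_smul_smul, hX, hY,
      pnorm2sq_sub, hX, hY]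
    have hs := core_scalar ε N₁ N₂ (pinner m n h₁ h₂) hε hh₁ hh₂ ht
    have e : (1/N₁^3)^2 * N₁^2 - 2 * (1/N₁^3 * (1/N₂^3) * pinner m n h₁ h₂) + (1/N₂^3)^2 * N₂^2
        = 1/N₁^4 - 2 * pinner m n h₁ h₂ / (N₁^3*N₂^3) + 1/N₂^4 := by
      field_simp
    rw [e]
    exact hs
  set x := ((a₂ - a₁)/(ρ₂ * N₁^3)) • h₁ with hx
  set y := (-(a₂/ρ₂)) • ((1/N₁^3) • h₁ - (1/N₂^3) • h₂) with hy
  have hdecomp : b₁ - b₂ = x + y := by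
    rw [hb₁, hb₂, hx, hy]
    match_scalars <;> field_simp <;> ring
  have hxb : pnorm2sq m n x = ((a₂ - a₁)/(ρ₂ * N₁^3))^2 * N₁^2 := by
    rw [hx, pnorm2sq_smul, hX]
  have hyb : pnorm2sq m n y ≤ (a₂/ρ₂)^2 * (4/ε^6 * pnorm2sq m n (h₁ - h₂)) := by
    rw [hy, pnorm2sq_smul, neg_pow]
    simp only [Even.neg_one_pow (by norm_num : Even 2), one_mul]
    exact mul_le_mul_of_nonneg_left hcore (by positivity)
  have hgrad : (a₂ - a₁)^2 ≤ 16*m*n*mnorm2sq m n (u₁ - u₂) := by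
    have h1 := abs_gradL1_sub m n u₁ u₂
    have h2 := gradL1_sq_le m n (u₁ - u₂)
    have h3 : (a₁ - a₂)^2 ≤ (gradL1 m n (u₁ - u₂))^2 := by
      rw [← sq_abs (a₁ - a₂)]
      exact pow_le_pow_left₀ (abs_nonneg _) h1 2
    nlinarith [h3, h2]
  have hNe : ε^4 ≤ N₁^4 := pow_le_pow_left₀ hε.le hh₁ 4
  have ha₂nn : 0 ≤ a₂ := gradL1_nonneg m n u₂
  have ha₂M : a₂^2 ≤ M^2 := pow_le_pow_left₀ ha₂nn ha₂ 2
  have hPnn : 0 ≤ pnorm2sq m n (h₁ - h₂) := pnorm2sq_nonneg m n _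
  have hUnn : 0 ≤ mnorm2sq m n (u₁ - u₂) := mnorm2sq_nonneg m n _
  have t1 : 2 * pnorm2sq m n x ≤ 32*m*n/(ρ₂^2*ε^4) * mnorm2sq m n (u₁ - u₂) := by
    rw [hxb]
    have e : 2 * (((a₂ - a₁)/(ρ₂ * N₁^3))^2 * N₁^2) = 2*(a₂-a₁)^2/(ρ₂^2*N₁^4) := by
      field_simp
    rw [e]
    have hd : 2*(a₂-a₁)^2/(ρ₂^2*N₁^4) ≤ 2*(16*m*n*mnorm2sq m n (u₁ - u₂))/(ρ₂^2*ε^4) := by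
      apply div_le_div₀ (by positivity) (by linarith) (by positivity)
      exact mul_le_mul_of_nonneg_left hNe (sq_nonneg ρ₂)
    have e2 : 2*(16*m*n*mnorm2sq m n (u₁ - u₂))/(ρ₂^2*ε^4)
        = 32*m*n/(ρ₂^2*ε^4) * mnorm2sq m n (u₁ - u₂) := by
      field_simp
      ring
    linarith [hd, e2.symm.le, e2.le]
  have t2 : 2 * pnorm2sq m n y ≤ 8*M^2/(ρ₂^2*ε^6) * pnorm2sq m n (h₁ - h₂) := by
    have step : 2 * ((a₂/ρ₂)^2 * (4/ε^6 * pnorm2sq m n (h₁ - h₂)))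
        ≤ 8*M^2/(ρ₂^2*ε^6) * pnorm2sq m n (h₁ - h₂) := by
      have e : 2 * ((a₂/ρ₂)^2 * (4/ε^6 * pnorm2sq m n (h₁ - h₂)))
          = 8*a₂^2/(ρ₂^2*ε^6) * pnorm2sq m n (h₁ - h₂) := by
        field_simp
        ring
      rw [e]
      apply mul_le_mul_of_nonneg_right _ hPnn
      apply div_le_div₀ (by positivity) (by linarith) (by positivity) le_rfl
    linarith [hyb, step]
  calc pnorm2sq m n (b₁ - b₂) = pnorm2sq m n (x + y) := by rw [hdecomp]
    _ ≤ 2 * pnorm2sq m n x + 2 * pnorm2sq m n y := pnorm2sq_add_le m n x y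
    _ ≤ 32*m*n/(ρ₂^2*ε^4) * mnorm2sq m n (u₁ - u₂)
        + 8*M^2/(ρ₂^2*ε^6) * pnorm2sq m n (h₁ - h₂) := add_le_add t1 t2
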